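/- arXiv:math/0602258 — 2 statements merged into one kernel-verified Lean document; each statement's English description precedes it below -/
import Mathlib

section
/- A vector c = (c_1,c_2,c_3,c_4,c_5) ∈ ℤ⁵ with c_5 = 1 and c_1 = 0 is cohomology-free if and only if c = (0,1,2,1,1). -/
/-- The primitive ray generators `l₁,…,l₇` of the fan, in counterclockwise order,
acting on `ℤ²` by the dot product. -/
def rayForm : Fin 7 → ℤ × ℤ :=
  ![(1, -1), (2, -1), (3, -1), (1, 0), (0, 1), (-1, 2), (0, -1)]

/-- Extend `c ∈ ℤ⁵` to seven coefficients by `c₆ = c₇ = 0`. -/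
def cExt (c : Fin 5 → ℤ) : Fin 7 → ℤ :=
  fun i => if h : (i : ℕ) < 5 then c ⟨i, h⟩ else 0

/-- `N_c(m) = {i : l_i(m) + c_i < 0}`. -/
def Nset (c : Fin 5 → ℤ) (m : ℤ × ℤ) : Finset (Fin 7) :=
  Finset.univ.filter fun i =>
    (rayForm i).1 * m.1 + (rayForm i).2 * m.2 + cExt c i < 0

/-- A subset of the cyclic index set `Fin 7` is a circular interval if it is empty
or of the form `{a, a+1, …, b}` with indices taken modulo 7. -/
def IsCircularInterval (S : Finset (Fin 7)) : Prop :=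
  S = ∅ ∨ ∃ (a : Fin 7) (n : ℕ),
    S = (Finset.range (n + 1)).image fun j : ℕ => a + (Fin.ofNat 7 j)

/-- `c ∈ ℤ⁵` is cohomology-free if for every `m ∈ ℤ²` and both `ε ∈ {1, -1}`,
the set `N_{εc}(m)` is a circular interval different from the whole index set. -/
def CohomologyFree (c : Fin 5 → ℤ) : Prop :=
  ∀ m : ℤ × ℤ, ∀ ε : ℤ, ε = 1 ∨ ε = -1 →
    IsCircularInterval (Nset (ε • c) m) ∧ Nset (ε • c) m ≠ Finset.univ

/-- `S` has at most one cyclic "descent" `i ∈ S`, `i+1 ∉ S`. -/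
def descOK (S : Finset (Fin 7)) : Prop :=
  ∀ i j : Fin 7, i ∈ S → i + 1 ∉ S → j ∈ S → j + 1 ∉ S → i = j

instance (S : Finset (Fin 7)) : Decidable (descOK S) := by unfold descOK; infer_instance

/-- Bounded version of circular-intervalness (decidable). -/
def IsCI' (S : Finset (Fin 7)) : Prop :=
  S = ∅ ∨ ∃ (a n : Fin 7),
    S = (Finset.range (n.val + 1)).image fun j : ℕ => a + (Fin.ofNat 7 j)

instance (S : Finset (Fin 7)) : Decidable (IsCI' S) := by unfold IsCI'; infer_instance

set_option maxRecDepth 10000 in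
lemma key1 : ∀ S : Finset (Fin 7), descOK S → IsCI' S := by decide

set_option maxRecDepth 10000 in
lemma key2 : ∀ (a n : Fin 7),
    descOK ((Finset.range (n.val + 1)).image fun j : ℕ => a + (Fin.ofNat 7 j)) ∨ n.val = 6 := by
  decide

lemma image_univ_of_ge (a : Fin 7) (n : ℕ) (hn : 6 ≤ n) :
    ((Finset.range (n + 1)).image fun j : ℕ => a + (Fin.ofNat 7 j)) = Finset.univ := by
  apply Finset.eq_univ_iff_forall.mpr
  intro k
  refine Finset.mem_image.mpr ⟨(k - a).val, Finset.mem_range.mpr ?_, ?_⟩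
  · have := (k - a).isLt; omega
  · rw [Fin.ofNat_val_eq_self]; exact add_sub_cancel a k

lemma ci_of_descOK (S : Finset (Fin 7)) (h : descOK S) : IsCircularInterval S := by
  rcases key1 S h with h' | ⟨a, n, h'⟩
  · exact Or.inl h'
  · exact Or.inr ⟨a, n.val, h'⟩

lemma descOK_of_ci (S : Finset (Fin 7)) (hne : S ≠ Finset.univ) (h : IsCircularInterval S) :
    descOK S := by
  rcases h with rfl | ⟨a, n, rfl⟩
  · intro i j hi _ _ _; simp at hi
  · by_cases hn : 6 ≤ n
    · exact absurd (image_univ_of_ge a n hn) hne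
    · have hn7 : n < 7 := by omega
      rcases key2 a ⟨n, hn7⟩ with h | h
      · exact h
      · simp at h; omega

lemma mem_Nset (c : Fin 5 → ℤ) (m : ℤ × ℤ) (i : Fin 7) :
    i ∈ Nset c m ↔ (rayForm i).1 * m.1 + (rayForm i).2 * m.2 + cExt c i < 0 := by
  simp [Nset]

lemma vec5 {α : Type*} (a b c' d e f g : α) : ![a,b,c',d,e,f,g] 5 = f := rfl
lemma vec6 {α : Type*} (a b c' d e f g : α) : ![a,b,c',d,e,f,g] 6 = g := rfl

lemma cExt_eval (c : Fin 5 → ℤ) : cExt c = ![c 0, c 1, c 2, c 3, c 4, 0, 0] := by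
  funext i; fin_cases i <;> rfl

lemma descOK_of_21 (S : Finset (Fin 7))
    (h01 : ¬((0:Fin 7) ∈ S ∧ (1:Fin 7) ∉ S ∧ (1:Fin 7) ∈ S ∧ (2:Fin 7) ∉ S))
    (h02 : ¬((0:Fin 7) ∈ S ∧ (1:Fin 7) ∉ S ∧ (2:Fin 7) ∈ S ∧ (3:Fin 7) ∉ S))
    (h03 : ¬((0:Fin 7) ∈ S ∧ (1:Fin 7) ∉ S ∧ (3:Fin 7) ∈ S ∧ (4:Fin 7) ∉ S))
    (h04 : ¬((0:Fin 7) ∈ S ∧ (1:Fin 7) ∉ S ∧ (4:Fin 7) ∈ S ∧ (5:Fin 7) ∉ S))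
    (h05 : ¬((0:Fin 7) ∈ S ∧ (1:Fin 7) ∉ S ∧ (5:Fin 7) ∈ S ∧ (6:Fin 7) ∉ S))
    (h06 : ¬((0:Fin 7) ∈ S ∧ (1:Fin 7) ∉ S ∧ (6:Fin 7) ∈ S ∧ (0:Fin 7) ∉ S))
    (h12 : ¬((1:Fin 7) ∈ S ∧ (2:Fin 7) ∉ S ∧ (2:Fin 7) ∈ S ∧ (3:Fin 7) ∉ S))
    (h13 : ¬((1:Fin 7) ∈ S ∧ (2:Fin 7) ∉ S ∧ (3:Fin 7) ∈ S ∧ (4:Fin 7) ∉ S))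
    (h14 : ¬((1:Fin 7) ∈ S ∧ (2:Fin 7) ∉ S ∧ (4:Fin 7) ∈ S ∧ (5:Fin 7) ∉ S))
    (h15 : ¬((1:Fin 7) ∈ S ∧ (2:Fin 7) ∉ S ∧ (5:Fin 7) ∈ S ∧ (6:Fin 7) ∉ S))
    (h16 : ¬((1:Fin 7) ∈ S ∧ (2:Fin 7) ∉ S ∧ (6:Fin 7) ∈ S ∧ (0:Fin 7) ∉ S))
    (h23 : ¬((2:Fin 7) ∈ S ∧ (3:Fin 7) ∉ S ∧ (3:Fin 7) ∈ S ∧ (4:Fin 7) ∉ S))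
    (h24 : ¬((2:Fin 7) ∈ S ∧ (3:Fin 7) ∉ S ∧ (4:Fin 7) ∈ S ∧ (5:Fin 7) ∉ S))
    (h25 : ¬((2:Fin 7) ∈ S ∧ (3:Fin 7) ∉ S ∧ (5:Fin 7) ∈ S ∧ (6:Fin 7) ∉ S))
    (h26 : ¬((2:Fin 7) ∈ S ∧ (3:Fin 7) ∉ S ∧ (6:Fin 7) ∈ S ∧ (0:Fin 7) ∉ S))
    (h34 : ¬((3:Fin 7) ∈ S ∧ (4:Fin 7) ∉ S ∧ (4:Fin 7) ∈ S ∧ (5:Fin 7) ∉ S))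
    (h35 : ¬((3:Fin 7) ∈ S ∧ (4:Fin 7) ∉ S ∧ (5:Fin 7) ∈ S ∧ (6:Fin 7) ∉ S))
    (h36 : ¬((3:Fin 7) ∈ S ∧ (4:Fin 7) ∉ S ∧ (6:Fin 7) ∈ S ∧ (0:Fin 7) ∉ S))
    (h45 : ¬((4:Fin 7) ∈ S ∧ (5:Fin 7) ∉ S ∧ (5:Fin 7) ∈ S ∧ (6:Fin 7) ∉ S))
    (h46 : ¬((4:Fin 7) ∈ S ∧ (5:Fin 7) ∉ S ∧ (6:Fin 7) ∈ S ∧ (0:Fin 7) ∉ S))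
    (h56 : ¬((5:Fin 7) ∈ S ∧ (6:Fin 7) ∉ S ∧ (6:Fin 7) ∈ S ∧ (0:Fin 7) ∉ S)) : descOK S := by
  intro i j hi hi1 hj hj1
  fin_cases i <;> fin_cases j
  · rfl
  · exact absurd ⟨hi, hi1, hj, hj1⟩ h01
  · exact absurd ⟨hi, hi1, hj, hj1⟩ h02
  · exact absurd ⟨hi, hi1, hj, hj1⟩ h03
  · exact absurd ⟨hi, hi1, hj, hj1⟩ h04
  · exact absurd ⟨hi, hi1, hj, hj1⟩ h05
  · exact absurd ⟨hi, hi1, hj, hj1⟩ h06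
  · exact absurd ⟨hj, hj1, hi, hi1⟩ h01
  · rfl
  · exact absurd ⟨hi, hi1, hj, hj1⟩ h12
  · exact absurd ⟨hi, hi1, hj, hj1⟩ h13
  · exact absurd ⟨hi, hi1, hj, hj1⟩ h14
  · exact absurd ⟨hi, hi1, hj, hj1⟩ h15
  · exact absurd ⟨hi, hi1, hj, hj1⟩ h16
  · exact absurd ⟨hj, hj1, hi, hi1⟩ h02
  · exact absurd ⟨hj, hj1, hi, hi1⟩ h12
  · rfl
  · exact absurd ⟨hi, hi1, hj, hj1⟩ h23
  · exact absurd ⟨hi, hi1, hj, hj1⟩ h24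
  · exact absurd ⟨hi, hi1, hj, hj1⟩ h25
  · exact absurd ⟨hi, hi1, hj, hj1⟩ h26
  · exact absurd ⟨hj, hj1, hi, hi1⟩ h03
  · exact absurd ⟨hj, hj1, hi, hi1⟩ h13
  · exact absurd ⟨hj, hj1, hi, hi1⟩ h23
  · rfl
  · exact absurd ⟨hi, hi1, hj, hj1⟩ h34
  · exact absurd ⟨hi, hi1, hj, hj1⟩ h35
  · exact absurd ⟨hi, hi1, hj, hj1⟩ h36
  · exact absurd ⟨hj, hj1, hi, hi1⟩ h04
  · exact absurd ⟨hj, hj1, hi, hi1⟩ h14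
  · exact absurd ⟨hj, hj1, hi, hi1⟩ h24
  · exact absurd ⟨hj, hj1, hi, hi1⟩ h34
  · rfl
  · exact absurd ⟨hi, hi1, hj, hj1⟩ h45
  · exact absurd ⟨hi, hi1, hj, hj1⟩ h46
  · exact absurd ⟨hj, hj1, hi, hi1⟩ h05
  · exact absurd ⟨hj, hj1, hi, hi1⟩ h15
  · exact absurd ⟨hj, hj1, hi, hi1⟩ h25
  · exact absurd ⟨hj, hj1, hi, hi1⟩ h35
  · exact absurd ⟨hj, hj1, hi, hi1⟩ h45
  · rfl
  · exact absurd ⟨hi, hi1, hj, hj1⟩ h56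
  · exact absurd ⟨hj, hj1, hi, hi1⟩ h06
  · exact absurd ⟨hj, hj1, hi, hi1⟩ h16
  · exact absurd ⟨hj, hj1, hi, hi1⟩ h26
  · exact absurd ⟨hj, hj1, hi, hi1⟩ h36
  · exact absurd ⟨hj, hj1, hi, hi1⟩ h46
  · exact absurd ⟨hj, hj1, hi, hi1⟩ h56
  · rfl


set_option maxHeartbeats 1000000 in
/-- Classification of cohomology-free vectors with `c₅ = 1` and `c₁ = 0`. -/
theorem classification_c5_one_c1_zero (c : Fin 5 → ℤ) (h5 : c 4 = 1)
    (h1 : c 0 = 0) :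
    CohomologyFree c ↔ c = ![0,1,2,1,1] := by
  constructor
  · intro h
    have key := fun (m : ℤ × ℤ) (ε : ℤ) (hε : ε = 1 ∨ ε = -1) =>
      descOK_of_ci _ (h m ε hε).2 (h m ε hε).1
    have hd0 := key ((-1:ℤ), (-1:ℤ)) (1:ℤ) (Or.inl rfl)
    have F0 : ¬((3:Fin 7) ∈ Nset ((1:ℤ) • c) ((-1:ℤ), (-1:ℤ)) ∧ (4:Fin 7) ∉ Nset ((1:ℤ) • c) ((-1:ℤ), (-1:ℤ)) ∧
        (5:Fin 7) ∈ Nset ((1:ℤ) • c) ((-1:ℤ), (-1:ℤ)) ∧ (6:Fin 7) ∉ Nset ((1:ℤ) • c) ((-1:ℤ), (-1:ℤ))) :=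
      fun ⟨p, q, r, s⟩ => absurd (hd0 3 5 p q r s) (by decide)
    simp [mem_Nset, rayForm, cExt_eval, vec5, vec6, h1, h5] at F0
    have hd1 := key ((1:ℤ), (1:ℤ)) (-1:ℤ) (Or.inr rfl)
    have F1 : ¬((3:Fin 7) ∈ Nset ((-1:ℤ) • c) ((1:ℤ), (1:ℤ)) ∧ (4:Fin 7) ∉ Nset ((-1:ℤ) • c) ((1:ℤ), (1:ℤ)) ∧
        (6:Fin 7) ∈ Nset ((-1:ℤ) • c) ((1:ℤ), (1:ℤ)) ∧ (0:Fin 7) ∉ Nset ((-1:ℤ) • c) ((1:ℤ), (1:ℤ))) :=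
      fun ⟨p, q, r, s⟩ => absurd (hd1 3 6 p q r s) (by decide)
    simp [mem_Nset, rayForm, cExt_eval, vec5, vec6, h1, h5] at F1
    have hd2 := key ((-1:ℤ), (-1:ℤ)) (1:ℤ) (Or.inl rfl)
    have F2 : ¬((2:Fin 7) ∈ Nset ((1:ℤ) • c) ((-1:ℤ), (-1:ℤ)) ∧ (3:Fin 7) ∉ Nset ((1:ℤ) • c) ((-1:ℤ), (-1:ℤ)) ∧
        (5:Fin 7) ∈ Nset ((1:ℤ) • c) ((-1:ℤ), (-1:ℤ)) ∧ (6:Fin 7) ∉ Nset ((1:ℤ) • c) ((-1:ℤ), (-1:ℤ))) :=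
      fun ⟨p, q, r, s⟩ => absurd (hd2 2 5 p q r s) (by decide)
    simp [mem_Nset, rayForm, cExt_eval, vec5, vec6, h1, h5] at F2
    have hd3 := key ((1:ℤ), (1:ℤ)) (-1:ℤ) (Or.inr rfl)
    have F3 : ¬((2:Fin 7) ∈ Nset ((-1:ℤ) • c) ((1:ℤ), (1:ℤ)) ∧ (3:Fin 7) ∉ Nset ((-1:ℤ) • c) ((1:ℤ), (1:ℤ)) ∧
        (6:Fin 7) ∈ Nset ((-1:ℤ) • c) ((1:ℤ), (1:ℤ)) ∧ (0:Fin 7) ∉ Nset ((-1:ℤ) • c) ((1:ℤ), (1:ℤ))) :=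
      fun ⟨p, q, r, s⟩ => absurd (hd3 2 6 p q r s) (by decide)
    simp [mem_Nset, rayForm, cExt_eval, vec5, vec6, h1, h5] at F3
    have hd4 := key ((-1:ℤ), (-1:ℤ)) (1:ℤ) (Or.inl rfl)
    have F4 : ¬((1:Fin 7) ∈ Nset ((1:ℤ) • c) ((-1:ℤ), (-1:ℤ)) ∧ (2:Fin 7) ∉ Nset ((1:ℤ) • c) ((-1:ℤ), (-1:ℤ)) ∧
        (5:Fin 7) ∈ Nset ((1:ℤ) • c) ((-1:ℤ), (-1:ℤ)) ∧ (6:Fin 7) ∉ Nset ((1:ℤ) • c) ((-1:ℤ), (-1:ℤ))) :=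
      fun ⟨p, q, r, s⟩ => absurd (hd4 1 5 p q r s) (by decide)
    simp [mem_Nset, rayForm, cExt_eval, vec5, vec6, h1, h5] at F4
    have hd5 := key ((-1:ℤ), (0:ℤ)) (1:ℤ) (Or.inl rfl)
    have F5 : ¬((0:Fin 7) ∈ Nset ((1:ℤ) • c) ((-1:ℤ), (0:ℤ)) ∧ (1:Fin 7) ∉ Nset ((1:ℤ) • c) ((-1:ℤ), (0:ℤ)) ∧
        (2:Fin 7) ∈ Nset ((1:ℤ) • c) ((-1:ℤ), (0:ℤ)) ∧ (3:Fin 7) ∉ Nset ((1:ℤ) • c) ((-1:ℤ), (0:ℤ))) :=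
      fun ⟨p, q, r, s⟩ => absurd (hd5 0 2 p q r s) (by decide)
    simp [mem_Nset, rayForm, cExt_eval, vec5, vec6, h1, h5] at F5
    have hbde : c 1 = 1 ∧ c 2 = 2 ∧ c 3 = 1 := by omega
    funext i
    fin_cases i
    · exact h1
    · exact hbde.1
    · exact hbde.2.1
    · exact hbde.2.2
    · exact h5
  · rintro rfl m ε hε
    have hne : Nset (ε • ![0,1,2,1,1]) m ≠ Finset.univ := by
      intro hu
      have g4 := Finset.eq_univ_iff_forall.mp hu 4
      have g6 := Finset.eq_univ_iff_forall.mp hu 6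
      rcases hε with rfl | rfl <;>
        simp [mem_Nset, rayForm, cExt_eval, vec5, vec6] at g4 g6 <;> omega
    refine ⟨ci_of_descOK _ ?_, hne⟩
    rcases hε with rfl | rfl <;>
      [refine descOK_of_21 _ ?_ ?_ ?_ ?_ ?_ ?_ ?_ ?_ ?_ ?_ ?_ ?_ ?_ ?_ ?_ ?_ ?_ ?_ ?_ ?_ ?_;
       refine descOK_of_21 _ ?_ ?_ ?_ ?_ ?_ ?_ ?_ ?_ ?_ ?_ ?_ ?_ ?_ ?_ ?_ ?_ ?_ ?_ ?_ ?_ ?_] <;>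
      simp [mem_Nset, rayForm, cExt_eval, vec5, vec6] <;> omega
end

section
/- If c = (c_1,c_2,c_3,c_4,c_5) ∈ ℤ⁵ is cohomology-free with c_5 = 1 and c_1 ≥ 2, then c_4 = c_1 or c_4 = c_1 + 1, and moreover c_2 ≤ 2c_1 + 1 and c_3 ≤ 3c_1 + 2. -/
lemma arc_mem (a : Fin 7) (n : ℕ) (x : Fin 7) :
    (x ∈ (Finset.range (n + 1)).image fun j : ℕ => a + (Fin.ofNat 7 j)) ↔ (x - a).val ≤ n := by
  simp only [Finset.mem_image, Finset.mem_range, Nat.lt_succ_iff]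
  constructor
  · rintro ⟨j, hj, rfl⟩
    have h1 : a + (Fin.ofNat 7 j) - a = (Fin.ofNat 7 j) := by
      rw [add_comm, add_sub_assoc, sub_self, add_zero]
    rw [h1]
    calc ((Fin.ofNat 7 j)).val ≤ j := by
            rw [Fin.val_ofNat]; exact Nat.mod_le j 7
      _ ≤ n := hj
  · intro hx
    refine ⟨(x - a).val, hx, ?_⟩
    rw [Fin.ofNat_val_eq_self, add_comm, sub_add_cancel]

lemma not_CI {S : Finset (Fin 7)} {p q r s : Fin 7}
    (hall : ∀ a : Fin 7, (q - a).val ≤ (p - a).val ∨ (q - a).val ≤ (r - a).val ∨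
      (s - a).val ≤ (p - a).val ∨ (s - a).val ≤ (r - a).val)
    (hp : p ∈ S) (hq : q ∉ S) (hr : r ∈ S) (hs : s ∉ S) : ¬ IsCircularInterval S := by
  rintro (rfl | ⟨a, n, rfl⟩)
  · exact absurd hp (Finset.notMem_empty p)
  · rw [arc_mem] at hp hr
    rw [arc_mem] at hq hs
    rcases hall a with h | h | h | h <;> omega

/-- If `c` is cohomology-free with `c₅ = 1` and `c₁ ≥ 2`, then
`c₄ ∈ {c₁, c₁ + 1}`, `c₂ ≤ 2c₁ + 1` and `c₃ ≤ 3c₁ + 2`. -/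
theorem upper_bounds_c5_one_c1_ge_two (c : Fin 5 → ℤ) (h : CohomologyFree c)
    (h5 : c 4 = 1) (h1 : 2 ≤ c 0) :
    (c 3 = c 0 ∨ c 3 = c 0 + 1) ∧ c 1 ≤ 2 * c 0 + 1 ∧ c 2 ≤ 3 * c 0 + 2 := by
  have e0 : cExt ((-1 : ℤ) • c) 0 = -(c 0) := by
    simp [cExt, show ((0:Fin 7):ℕ) = 0 from rfl]
  have e1 : cExt ((-1 : ℤ) • c) 1 = -(c 1) := by
    simp [cExt, show ((1:Fin 7):ℕ) = 1 from rfl]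
  have e2 : cExt ((-1 : ℤ) • c) 2 = -(c 2) := by
    simp [cExt, show ((2:Fin 7):ℕ) = 2 from rfl]
  have e3 : cExt ((-1 : ℤ) • c) 3 = -(c 3) := by
    simp [cExt, show ((3:Fin 7):ℕ) = 3 from rfl]
  have e4 : cExt ((-1 : ℤ) • c) 4 = -(c 4) := by
    simp [cExt, show ((4:Fin 7):ℕ) = 4 from rfl]
  have e5 : cExt ((-1 : ℤ) • c) 5 = 0 := by
    simp [cExt, show ((5:Fin 7):ℕ) = 5 from rfl]
  have e6 : cExt ((-1 : ℤ) • c) 6 = 0 := by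
    simp [cExt, show ((6:Fin 7):ℕ) = 6 from rfl]
  -- Step 1: c 3 ≥ c 0
  have hA : c 0 ≤ c 3 := by
    by_contra hlt
    push_neg at hlt
    obtain ⟨hCI, _⟩ := h (c 3, 0) (-1) (Or.inr rfl)
    refine not_CI (p := 0) (q := 3) (r := 4) (s := 6) (by decide)
      ?_ ?_ ?_ ?_ hCI
    · rw [mem_Nset]; show (1 : ℤ) * (c 3) + (-1) * 0 + cExt ((-1 : ℤ) • c) 0 < 0
      rw [e0]; omega
    · rw [mem_Nset]; show ¬ ((1 : ℤ) * (c 3) + 0 * 0 + cExt ((-1 : ℤ) • c) 3 < 0)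
      rw [e3]; omega
    · rw [mem_Nset]; show (0 : ℤ) * (c 3) + 1 * 0 + cExt ((-1 : ℤ) • c) 4 < 0
      rw [e4]; omega
    · rw [mem_Nset]; show ¬ ((0 : ℤ) * (c 3) + (-1) * 0 + cExt ((-1 : ℤ) • c) 6 < 0)
      rw [e6]; omega
  -- Step 2: c 3 ≤ c 0 + 1
  have hB : c 3 ≤ c 0 + 1 := by
    by_contra hlt
    push_neg at hlt
    obtain ⟨hCI, _⟩ := h (c 0 + 1, 1) (-1) (Or.inr rfl)
    refine not_CI (p := 3) (q := 4) (r := 6) (s := 0) (by decide)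
      ?_ ?_ ?_ ?_ hCI
    · rw [mem_Nset]; show (1 : ℤ) * (c 0 + 1) + 0 * 1 + cExt ((-1 : ℤ) • c) 3 < 0
      rw [e3]; omega
    · rw [mem_Nset]; show ¬ ((0 : ℤ) * (c 0 + 1) + 1 * 1 + cExt ((-1 : ℤ) • c) 4 < 0)
      rw [e4]; omega
    · rw [mem_Nset]; show (0 : ℤ) * (c 0 + 1) + (-1) * 1 + cExt ((-1 : ℤ) • c) 6 < 0
      rw [e6]; omega
    · rw [mem_Nset]; show ¬ ((1 : ℤ) * (c 0 + 1) + (-1) * 1 + cExt ((-1 : ℤ) • c) 0 < 0)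
      rw [e0]; omega
  -- common witness for steps 3, 4
  have hq3 : (3 : Fin 7) ∉ Nset ((-1 : ℤ) • c) (c 3, c 3 - c 0) := by
    rw [mem_Nset]
    show ¬ ((1 : ℤ) * (c 3) + 0 * (c 3 - c 0) + cExt ((-1 : ℤ) • c) 3 < 0)
    rw [e3]; omega
  have hr5 : (5 : Fin 7) ∈ Nset ((-1 : ℤ) • c) (c 3, c 3 - c 0) := by
    rw [mem_Nset]
    show (-1 : ℤ) * (c 3) + 2 * (c 3 - c 0) + cExt ((-1 : ℤ) • c) 5 < 0
    rw [e5]; omega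
  have hs0 : (0 : Fin 7) ∉ Nset ((-1 : ℤ) • c) (c 3, c 3 - c 0) := by
    rw [mem_Nset]
    show ¬ ((1 : ℤ) * (c 3) + (-1) * (c 3 - c 0) + cExt ((-1 : ℤ) • c) 0 < 0)
    rw [e0]; omega
  -- Step 3: c 1 ≤ 2 c 0 + 1
  have hC : c 1 ≤ 2 * c 0 + 1 := by
    by_contra hlt
    push_neg at hlt
    obtain ⟨hCI, _⟩ := h (c 3, c 3 - c 0) (-1) (Or.inr rfl)
    refine not_CI (p := 1) (q := 3) (r := 5) (s := 0) (by decide)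
      ?_ hq3 hr5 hs0 hCI
    rw [mem_Nset]
    show (2 : ℤ) * (c 3) + (-1) * (c 3 - c 0) + cExt ((-1 : ℤ) • c) 1 < 0
    rw [e1]; omega
  -- Step 4: c 2 ≤ 3 c 0 + 2
  have hD : c 2 ≤ 3 * c 0 + 2 := by
    by_contra hlt
    push_neg at hlt
    obtain ⟨hCI, _⟩ := h (c 3, c 3 - c 0) (-1) (Or.inr rfl)
    refine not_CI (p := 2) (q := 3) (r := 5) (s := 0) (by decide)
      ?_ hq3 hr5 hs0 hCI
    rw [mem_Nset]
    show (3 : ℤ) * (c 3) + (-1) * (c 3 - c 0) + cExt ((-1 : ℤ) • c) 2 < 0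
    rw [e2]; omega
  exact ⟨by omega, hC, hD⟩
end
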